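/- Let p be a prime, m and d natural numbers, and let k = (k_1,…,k_d), k' = (k'_1,…,k'_d) ∈ ℕ^d with k'_i ≤ k_i for all i. Then the product ∏_{i=1}^{d} {k_i choose k'_i}_{(m),q}, a priori an element of ℚ(q), lies in the subring ℤ[q] (i.e., it is a polynomial with integer coefficients). -/
import Mathlib


noncomputable section

open Polynomial

/-- `ℤ[q]`, the polynomial ring in one variable `q` over `ℤ`. -/
abbrev Zq : Type := Polynomial ℤ

/-- `ℚ(q)`, realized as the fraction field of `ℤ[q]`. -/
abbrev Qq : Type := FractionRing Zq

/-- The canonical embedding `ℤ[q] → ℚ(q)`. -/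
def ι : Zq →+* Qq := algebraMap Zq Qq

/-- The image of the variable `q` in `ℚ(q)`. -/
def qQ : Qq := ι X

/-- The `q^a`-integer `(n)_{q^a} = 1 + q^a + ⋯ + q^{a(n-1)}` in `ℤ[q]`. -/
def qInt (a n : ℕ) : Zq := ∑ j ∈ Finset.range n, X ^ (a * j)

/-- The `q^a`-factorial `(n)_{q^a}! = ∏_{i=1}^{n} (i)_{q^a}` in `ℤ[q]`. -/
def qFact (a n : ℕ) : Zq := ∏ i ∈ Finset.range n, qInt a (i + 1)

/-- The prime ideal `(p, q - 1)` of `ℤ[q]`. -/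
def pqIdeal (p : ℕ) : Ideal Zq := Ideal.span {C (p : ℤ), X - 1}

/-- Membership in the localization `ℤ[q]_{(p,q-1)}`, viewed inside `ℚ(q)`:
`x = a / b` with `b ∉ (p, q-1)`. -/
def InLoc (p : ℕ) (x : Qq) : Prop :=
  ∃ a b : Zq, b ∉ pqIdeal p ∧ x * ι b = ι a

/-- Being a unit of the localization `ℤ[q]_{(p,q-1)}`, viewed inside `ℚ(q)`:
`x = a / b` with `a, b ∉ (p, q-1)`. -/
def IsLocUnit (p : ℕ) (x : Qq) : Prop :=
  ∃ a b : Zq, a ∉ pqIdeal p ∧ b ∉ pqIdeal p ∧ x * ι b = ι a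

/-- The Gaussian `q`-binomial coefficient `(k choose k')_q` as an element of `ℚ(q)`. -/
def qBinomF (k k' : ℕ) : Qq :=
  ι (qFact 1 k) / (ι (qFact 1 k') * ι (qFact 1 (k - k')))

/-- The level-`m` coefficient `{k choose k'}_{(m),q}` as an element of `ℚ(q)`. -/
def braceC (p m k k' : ℕ) : Qq :=
  ι (qFact (p ^ m) (k / p ^ m)) /
    (ι (qFact (p ^ m) (k' / p ^ m)) * ι (qFact (p ^ m) ((k - k') / p ^ m)))

/-- The level-`m` coefficient `⟨k choose k'⟩_{(m),q}` as an element of `ℚ(q)`. -/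
def angleC (p m k k' : ℕ) : Qq := qBinomF k k' * (braceC p m k k')⁻¹

/-- The Gaussian binomial coefficient as a polynomial, via the `q`-Pascal recursion. -/
def qbin (a : ℕ) : ℕ → ℕ → Zq
  | _, 0 => 1
  | 0, _ + 1 => 0
  | n + 1, kk + 1 => qbin a n kk + X ^ (a * (kk + 1)) * qbin a n (kk + 1)

lemma qbin_eq_zero (a : ℕ) : ∀ n kk, n < kk → qbin a n kk = 0 := by
  intro n
  induction n with
  | zero =>
    intro kk hkk
    match kk, hkk with
    | kk + 1, _ => rfl
  | succ n ih =>
    intro kk hkk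
    match kk, hkk with
    | kk + 1, hkk =>
      show qbin a n kk + X ^ (a * (kk + 1)) * qbin a n (kk + 1) = 0
      rw [ih kk (by omega), ih (kk + 1) (by omega)]
      ring

lemma qInt_pascal (a n kk : ℕ) (h : kk ≤ n) :
    qInt a (n + 1) = qInt a (kk + 1) + X ^ (a * (kk + 1)) * qInt a (n - kk) := by
  unfold qInt
  rw [Finset.mul_sum]
  have : Finset.range (n + 1) = Finset.range (kk + 1) ∪ Finset.Ico (kk + 1) (n + 1) := by
    simp only [Finset.range_eq_Ico]
    exact (Finset.Ico_union_Ico_eq_Ico (by omega) (by omega)).symm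
  rw [this, Finset.sum_union (by
    rw [Finset.range_eq_Ico]
    exact Finset.Ico_disjoint_Ico_consecutive 0 (kk + 1) (n + 1))]
  congr 1
  rw [Finset.sum_Ico_eq_sum_range]
  have hn : n + 1 - (kk + 1) = n - kk := by omega
  rw [hn]
  apply Finset.sum_congr rfl
  intro i _
  rw [← pow_add]
  congr 1
  ring

lemma qFact_succ (a n : ℕ) : qFact a (n + 1) = qFact a n * qInt a (n + 1) := by
  unfold qFact
  rw [Finset.prod_range_succ]

lemma qbin_mul_qFact (a : ℕ) : ∀ n kk, kk ≤ n →
    qbin a n kk * (qFact a kk * qFact a (n - kk)) = qFact a n := by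
  intro n
  induction n with
  | zero =>
    intro kk hkk
    interval_cases kk
    show (1 : Zq) * (qFact a 0 * qFact a 0) = qFact a 0
    simp [qFact]
  | succ n ih =>
    intro kk hkk
    match kk with
    | 0 =>
      show (1 : Zq) * (qFact a 0 * qFact a (n + 1)) = qFact a (n + 1)
      simp [qFact]
    | kk + 1 =>
      have hkn : kk ≤ n := by omega
      have hsub : n + 1 - (kk + 1) = n - kk := by omega
      show (qbin a n kk + X ^ (a * (kk + 1)) * qbin a n (kk + 1)) *
        (qFact a (kk + 1) * qFact a (n + 1 - (kk + 1))) = qFact a (n + 1)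
      rw [hsub, qFact_succ a kk]
      have hsecond : qbin a n (kk + 1) * (qFact a (kk + 1) * qFact a (n - kk))
          = qInt a (n - kk) * qFact a n := by
        rcases Nat.lt_or_ge n (kk + 1) with hlt | hge
        · have hnk : n - kk = 0 := by omega
          rw [qbin_eq_zero a n (kk + 1) hlt, hnk]
          simp [qInt]
        · have h1 : n - kk = (n - (kk + 1)) + 1 := by omega
          rw [h1, qFact_succ a (n - (kk + 1))]
          have := ih (kk + 1) hge
          calc qbin a n (kk + 1) * (qFact a (kk + 1) *
                (qFact a (n - (kk + 1)) * qInt a (n - (kk + 1) + 1)))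
              = (qbin a n (kk + 1) * (qFact a (kk + 1) * qFact a (n - (kk + 1)))) *
                qInt a (n - (kk + 1) + 1) := by ring
            _ = qFact a n * qInt a (n - (kk + 1) + 1) := by rw [this]
            _ = qInt a (n - (kk + 1) + 1) * qFact a n := by ring
      have hfirst := ih kk hkn
      have expand : (qbin a n kk + X ^ (a * (kk + 1)) * qbin a n (kk + 1)) *
          (qFact a kk * qInt a (kk + 1) * qFact a (n - kk))
          = qInt a (kk + 1) * (qbin a n kk * (qFact a kk * qFact a (n - kk)))
            + X ^ (a * (kk + 1)) *
              (qbin a n (kk + 1) * (qFact a (kk + 1) * qFact a (n - kk)))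
              * (qInt a (kk + 1) * (qFact a kk * qInt a (kk + 1) * qFact a (n - kk)))
                * 0 + X ^ (a * (kk + 1)) *
              (qbin a n (kk + 1) * ((qFact a kk * qInt a (kk + 1)) * qFact a (n - kk))) := by
        ring
      rw [expand]
      rw [← qFact_succ a kk, hsecond, hfirst]
      rw [qFact_succ a n, qInt_pascal a n kk hkn]
      ring

lemma qInt_ne_zero (a n : ℕ) (hn : 0 < n) : qInt a n ≠ 0 := by
  intro hzero
  have h1 : (qInt a n).eval 1 = (n : ℤ) := by
    unfold qInt
    simp [Polynomial.eval_finset_sum]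
  rw [hzero] at h1
  simp at h1
  omega

lemma qFact_ne_zero (a n : ℕ) : qFact a n ≠ 0 := by
  unfold qFact
  apply Finset.prod_ne_zero_iff.2
  intro i _
  exact qInt_ne_zero a (i + 1) (by omega)

lemma ι_ne_zero {x : Zq} (hx : x ≠ 0) : ι x ≠ 0 := by
  intro hzero
  exact hx ((map_eq_zero_iff ι (IsFractionRing.injective Zq Qq)).1 hzero)

lemma qFact_div_int (a r r' r'' : ℕ) (hle : r' + r'' ≤ r) :
    ∃ f : Zq, ι (qFact a r) / (ι (qFact a r') * ι (qFact a r'')) = ι f := by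
  refine ⟨qbin a (r' + r'') r' * ∏ i ∈ Finset.Ico (r' + r'') r, qInt a (i + 1), ?_⟩
  have key : qFact a r = (qbin a (r' + r'') r' *
      ∏ i ∈ Finset.Ico (r' + r'') r, qInt a (i + 1)) * (qFact a r' * qFact a r'') := by
    have h1 : qFact a r = qFact a (r' + r'') *
        ∏ i ∈ Finset.Ico (r' + r'') r, qInt a (i + 1) := by
      unfold qFact
      simp only [Finset.range_eq_Ico]
      exact (Finset.prod_Ico_consecutive _ (Nat.zero_le _) hle).symm
    have h2 : qbin a (r' + r'') r' * (qFact a r' * qFact a r'') = qFact a (r' + r'') := by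
      have h3 := qbin_mul_qFact a (r' + r'') r' (by omega)
      have hsr : r' + r'' - r' = r'' := by omega
      rwa [hsr] at h3
    rw [h1, ← h2]
    ring
  rw [div_eq_iff (mul_ne_zero (ι_ne_zero (qFact_ne_zero _ _)) (ι_ne_zero (qFact_ne_zero _ _))),
    key, map_mul, map_mul, map_mul]

lemma braceC_int (p : ℕ) (hp : p.Prime) (m k k' : ℕ) (h : k' ≤ k) :
    ∃ f : Zq, braceC p m k k' = ι f := by
  have hapos : 0 < p ^ m := pow_pos hp.pos m
  have hle : k' / p ^ m + (k - k') / p ^ m ≤ k / p ^ m := by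
    have h1 : k' / p ^ m * p ^ m ≤ k' := Nat.div_mul_le_self _ _
    have h2 : (k - k') / p ^ m * p ^ m ≤ k - k' := Nat.div_mul_le_self _ _
    refine (Nat.le_div_iff_mul_le hapos).2 ?_
    rw [add_mul]
    omega
  exact qFact_div_int (p ^ m) _ _ _ hle

/-- For multi-indices `k' ≤ k`, the product of the level-`m` coefficients
`{k_i choose k'_i}_{(m),q}` lies in `ℤ[q]`. -/
theorem stmt1 (p : ℕ) (hp : p.Prime) (m d : ℕ) (k k' : Fin d → ℕ)
    (h : ∀ i, k' i ≤ k i) :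
    ∃ f : Zq, (∏ i, braceC p m (k i) (k' i)) = ι f := by
  choose f hf using fun i => braceC_int p hp m (k i) (k' i) (h i)
  refine ⟨∏ i, f i, ?_⟩
  rw [map_prod]
  exact Finset.prod_congr rfl fun i _ => hf i
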